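/- Let T be an infinite tree. Then the following conditions are equivalent: (i) T is almost a ray; (ii) for every non-degenerate labeling l : V(T) → [0,∞), the ultrametric space (V(T), d_l) is totally bounded if and only if there is an infinite totally bounded subset A ⊆ V(T) of (V(T), d_l). -/

import Mathlib

open SimpleGraph

/-- `d` is an ultrametric on `V`: a metric satisfying the strong triangle inequality. -/
def IsUltrametricOn {V : Type*} (d : V → V → ℝ) : Prop :=
  (∀ x y, 0 ≤ d x y) ∧ (∀ x y, d x y = d y x) ∧
    (∀ x y, d x y = 0 ↔ x = y) ∧
    ∀ x y z, d x y ≤ max (d x z) (d z y)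

/-- The vertex labeling `l` of the graph `G` is non-degenerate:
`max {l u, l v} > 0` for every edge `{u, v}`. -/
def NondegenerateLabeling {V : Type*} (G : SimpleGraph V) (l : V → ℝ) : Prop :=
  ∀ u v, G.Adj u v → 0 < max (l u) (l v)

/-- `d` is the function `d_l` generated by the vertex labeling `l` on the tree `G`:
`d u u = 0`, and for `u ≠ v`, `d u v` is the maximum of the labels of the vertices of
the (unique) path joining `u` and `v`. -/
def IsLabelDist {V : Type*} (G : SimpleGraph V) (l : V → ℝ) (d : V → V → ℝ) : Prop :=
  (∀ u, d u u = 0) ∧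
    ∀ u v : V, u ≠ v → ∀ p : G.Walk u v, p.IsPath →
      IsGreatest (l '' {w | w ∈ p.support}) (d u v)

/-- `x` is a Cauchy sequence with respect to the distance function `d`. -/
def CauchyWith {V : Type*} (d : V → V → ℝ) (x : ℕ → V) : Prop :=
  ∀ ε : ℝ, 0 < ε → ∃ N : ℕ, ∀ m ≥ N, ∀ n ≥ N, d (x m) (x n) < ε

/-- The set `A` is totally bounded with respect to the distance function `d`:
for every `r > 0` it is covered by finitely many open balls of radius `r` centered in `A`. -/
def TotallyBoundedWith {V : Type*} (d : V → V → ℝ) (A : Set V) : Prop :=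
  ∀ r : ℝ, 0 < r → ∃ s : Finset V, ↑s ⊆ A ∧ ∀ x ∈ A, ∃ c ∈ s, d c x < r

/-- The space `V` with distance `d` is compact: every cover of `V` by open balls
(given by center–radius pairs) contains a finite subcover. -/
def CompactWith {V : Type*} (d : V → V → ℝ) : Prop :=
  ∀ F : Set (V × ℝ), (∀ x : V, ∃ p ∈ F, d p.1 x < p.2) →
    ∃ s : Finset (V × ℝ), ↑s ⊆ F ∧ ∀ x : V, ∃ p ∈ s, d p.1 x < p.2

/-- The subgraph `R` of `G` is a ray: its vertices can be enumerated as a sequence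
`f 0, f 1, …` of pairwise distinct vertices, with edges exactly `{f n, f (n+1)}`. -/
def IsRaySubgraph {V : Type*} {G : SimpleGraph V} (R : G.Subgraph) : Prop :=
  ∃ f : ℕ → V, Function.Injective f ∧ R.verts = Set.range f ∧
    ∀ x y, R.Adj x y ↔ ∃ n, (x = f n ∧ y = f (n + 1)) ∨ (x = f (n + 1) ∧ y = f n)

/-- The subgraph `T₀` of `G` is a finite subtree. -/
def IsFiniteSubtree {V : Type*} {G : SimpleGraph V} (T₀ : G.Subgraph) : Prop :=
  T₀.verts.Finite ∧ T₀.coe.IsTree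

/-- The subgraph `H` of `G` is almost a ray: `H` is the union of a ray and a finite subtree. -/
def IsAlmostRaySubgraph {V : Type*} {G : SimpleGraph V} (H : G.Subgraph) : Prop :=
  ∃ R T₀ : G.Subgraph, IsRaySubgraph R ∧ IsFiniteSubtree T₀ ∧ T₀ ⊔ R = H

/-- The graph `G` is almost a ray: `G` is the union of a ray and a finite subtree. -/
def IsAlmostRayGraph {V : Type*} (G : SimpleGraph V) : Prop :=
  ∃ R T₀ : G.Subgraph, IsRaySubgraph R ∧ IsFiniteSubtree T₀ ∧ T₀ ⊔ R = ⊤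

/-- `H` is the convex hull of the vertex set `A` in `G`: a subtree containing `A`
which is a subgraph of every subtree of `G` containing `A`. -/
def IsConvexHullSubtree {V : Type*} (G : SimpleGraph V) (A : Set V) (H : G.Subgraph) : Prop :=
  H.coe.IsTree ∧ A ⊆ H.verts ∧
    ∀ H' : G.Subgraph, H'.coe.IsTree → A ⊆ H'.verts → H ≤ H'


namespace Stmt10Aux

open scoped Classical

variable {V : Type*} {G : SimpleGraph V}

/-- Canonical path in a tree. -/
noncomputable def pathB (hG : G.IsTree) (u v : V) : G.Walk u v :=
  (hG.existsUnique_path u v).choose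

lemma pathB_isPath (hG : G.IsTree) (u v : V) : (pathB hG u v).IsPath :=
  (hG.existsUnique_path u v).choose_spec.1

lemma path_eq (hG : G.IsTree) {u v : V} {p q : G.Walk u v} (hp : p.IsPath) (hq : q.IsPath) :
    p = q := by
  have h := hG.existsUnique_path u v
  rw [h.unique hp hq]

lemma pathB_eq (hG : G.IsTree) {u v : V} {p : G.Walk u v} (hp : p.IsPath) :
    pathB hG u v = p :=
  path_eq hG (pathB_isPath hG u v) hp

lemma pathB_self (hG : G.IsTree) (u : V) : pathB hG u u = Walk.nil :=
  pathB_eq hG Walk.IsPath.nil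

/-- The canonical label distance. -/
noncomputable def dOf (hG : G.IsTree) (l : V → ℝ) (u v : V) : ℝ :=
  if u = v then 0 else sSup (l '' {w | w ∈ (pathB hG u v).support})

lemma dOf_isLabelDist (hG : G.IsTree) (l : V → ℝ) : IsLabelDist G l (dOf hG l) := by
  constructor
  · intro u; simp [dOf]
  · intro u v huv p hp
    have hp' : p = pathB hG u v := (pathB_eq hG hp).symm
    subst hp'
    rw [show dOf hG l u v = sSup (l '' {w | w ∈ (pathB hG u v).support}) from if_neg huv]
    have hfin : (l '' {w | w ∈ (pathB hG u v).support}).Finite :=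
      ((pathB hG u v).support.finite_toSet).image l
    have hne : (l '' {w | w ∈ (pathB hG u v).support}).Nonempty :=
      ⟨l u, u, (pathB hG u v).start_mem_support, rfl⟩
    exact ⟨hne.csSup_mem hfin, fun x hx => le_csSup hfin.bddAbove hx⟩

section D

variable {l : V → ℝ} {d : V → V → ℝ}

lemma le_d (hG : G.IsTree) (hd : IsLabelDist G l d) {u v w : V} (hne : u ≠ v)
    (hw : w ∈ (pathB hG u v).support) : l w ≤ d u v :=
  (hd.2 u v hne _ (pathB_isPath hG u v)).2 ⟨w, hw, rfl⟩

lemma d_mem (hG : G.IsTree) (hd : IsLabelDist G l d) {u v : V} (hne : u ≠ v) :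
    ∃ w ∈ (pathB hG u v).support, d u v = l w := by
  obtain ⟨w, hw, hlw⟩ := (hd.2 u v hne _ (pathB_isPath hG u v)).1
  exact ⟨w, hw, hlw.symm⟩

lemma d_symm (hG : G.IsTree) (hd : IsLabelDist G l d) (u v : V) : d u v = d v u := by
  rcases eq_or_ne u v with rfl | hne
  · rfl
  · have h1 := hd.2 u v hne _ (pathB_isPath hG u v)
    have h2 := hd.2 v u hne.symm ((pathB hG u v).reverse)
      ((pathB_isPath hG u v).reverse)
    rw [Walk.support_reverse] at h2
    have hss : {w | w ∈ ((pathB hG u v).support).reverse} = {w | w ∈ (pathB hG u v).support} := by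
      ext w; simp
    rw [hss] at h2
    exact h1.unique h2

lemma endpoint_le_d (hG : G.IsTree) (hd : IsLabelDist G l d) {u v : V} (hne : u ≠ v) :
    l u ≤ d u v ∧ l v ≤ d u v :=
  ⟨le_d hG hd hne (pathB hG u v).start_mem_support,
   le_d hG hd hne (pathB hG u v).end_mem_support⟩

/-- If all labels on the paths from `c` to `a` and `c` to `b` are small, then all labels on
the path from `a` to `b` are small. -/
lemma label_lt_on_path (hG : G.IsTree) (hd : IsLabelDist G l d) {a b c : V} {r : ℝ}
    (hab : a ≠ b) (hca : c ≠ a → d c a < r) (hcb : c ≠ b → d c b < r) :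
    ∀ w ∈ (pathB hG a b).support, l w < r := by
  intro w hw
  rcases eq_or_ne c a with rfl | hca'
  · calc l w ≤ d c b := le_d hG hd hab hw
      _ < r := hcb hab
  rcases eq_or_ne c b with rfl | hcb'
  · have h1 : l w ≤ d a c := le_d hG hd hab hw
    rw [d_symm hG hd a c] at h1
    exact lt_of_le_of_lt h1 (hca hca')
  · set W0 : G.Walk a b := ((pathB hG c a).reverse.append (pathB hG c b)) with hW0
    have hbp : W0.bypass.IsPath := W0.bypass_isPath
    have heq : pathB hG a b = W0.bypass := pathB_eq hG hbp
    rw [heq] at hw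
    have hw' : w ∈ W0.support := W0.support_bypass_subset hw
    rw [hW0, Walk.mem_support_append_iff, Walk.support_reverse] at hw'
    rcases hw' with hw' | hw'
    · rw [List.mem_reverse] at hw'
      exact lt_of_le_of_lt (le_d hG hd hca' hw') (hca hca')
    · exact lt_of_le_of_lt (le_d hG hd hcb' hw') (hcb hcb')

end D

end Stmt10Aux

namespace Stmt10Aux

variable {V : Type*} {G : SimpleGraph V}

section Ray

variable {f : ℕ → V}

/-- The walk along a ray from `f n` to `f (n + k)`. -/
def rayWalk (hadj : ∀ n, G.Adj (f n) (f (n + 1))) : (n k : ℕ) → G.Walk (f n) (f (n + k))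
  | _, 0 => Walk.nil
  | n, k + 1 => (rayWalk hadj n k).concat (hadj (n + k))

lemma support_rayWalk (hadj : ∀ n, G.Adj (f n) (f (n + 1))) (n k : ℕ) :
    (rayWalk hadj n k).support = (List.range (k + 1)).map (fun i => f (n + i)) := by
  induction k with
  | zero => rw [rayWalk]; rfl
  | succ k ih =>
    rw [rayWalk, Walk.support_concat, ih, List.range_succ (n := k + 1)]
    simp

lemma mem_support_rayWalk (hadj : ∀ n, G.Adj (f n) (f (n + 1))) {n k : ℕ} {x : V} :
    x ∈ (rayWalk hadj n k).support ↔ ∃ i ≤ k, x = f (n + i) := by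
  rw [support_rayWalk]
  simp only [List.mem_map, List.mem_range, Nat.lt_succ_iff]
  constructor
  · rintro ⟨i, hi, rfl⟩; exact ⟨i, hi, rfl⟩
  · rintro ⟨i, hi, rfl⟩; exact ⟨i, hi, rfl⟩

lemma isPath_rayWalk (hinj : Function.Injective f) (hadj : ∀ n, G.Adj (f n) (f (n + 1)))
    (n k : ℕ) : (rayWalk hadj n k).IsPath := by
  rw [Walk.isPath_def, support_rayWalk]
  refine List.Nodup.map ?_ List.nodup_range
  intro a b hab
  exact Nat.add_left_cancel (hinj hab)

/-- The canonical path between two ray vertices is along the ray. -/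
lemma pathB_ray (hG : G.IsTree) (hinj : Function.Injective f)
    (hadj : ∀ n, G.Adj (f n) (f (n + 1))) {n m : ℕ} (hnm : n ≤ m) :
    pathB hG (f n) (f m) =
      (rayWalk hadj n (m - n)).copy rfl (by rw [Nat.add_sub_cancel' hnm]) :=
  pathB_eq hG (by rw [Walk.isPath_copy]; exact isPath_rayWalk hinj hadj n (m - n))

/-- Any edge between two ray vertices is between consecutive vertices. -/
lemma ray_adj_consecutive (hG : G.IsTree) (hinj : Function.Injective f)
    (hadj : ∀ n, G.Adj (f n) (f (n + 1))) {n m : ℕ} (h : G.Adj (f n) (f m)) (hnm : n < m) :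
    m = n + 1 := by
  by_contra hne
  have h1 : m - n ≠ 0 := by omega
  -- the edge walk is a path
  have hP1 : (Walk.cons h Walk.nil).IsPath := by
    rw [Walk.cons_isPath_iff]
    exact ⟨Walk.IsPath.nil, by simpa using h.ne⟩
  have heq : pathB hG (f n) (f m) = Walk.cons h Walk.nil := pathB_eq hG hP1
  have hmem : f (n + 1) ∈ (pathB hG (f n) (f m)).support := by
    rw [pathB_ray hG hinj hadj hnm.le, Walk.support_copy, mem_support_rayWalk]
    exact ⟨1, by omega, rfl⟩
  rw [heq] at hmem
  simp only [Walk.support_cons, Walk.support_nil, List.mem_cons, List.mem_singleton] at hmem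
  rcases hmem with h' | h' | h'
  · exact absurd (hinj h') (by omega)
  · exact absurd (hinj h') (by omega)
  · simp at h'

end Ray

section Forced

variable {l : V → ℝ} {d : V → V → ℝ}

/-- If the whole space is totally bounded, the set of vertices with label `≥ 1` is finite. -/
lemma finite_of_totallyBounded (hG : G.IsTree) (hd : IsLabelDist G l d)
    (hTB : TotallyBoundedWith d Set.univ) : {x : V | 1 ≤ l x}.Finite := by
  obtain ⟨s, -, hs⟩ := hTB 1 one_pos
  refine Set.Finite.subset s.finite_toSet ?_
  intro x hx
  obtain ⟨c, hc, hcx⟩ := hs x (Set.mem_univ x)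
  rcases eq_or_ne c x with rfl | hne
  · exact hc
  · exact absurd hcx (not_lt.2 (le_trans hx (endpoint_le_d hG hd hne).2))

end Forced

end Stmt10Aux

namespace Stmt10Aux

variable {V : Type*} {G : SimpleGraph V}

open scoped Classical

section Koenig

/-- Destructure the canonical path between distinct vertices. -/
lemma exists_second (hG : G.IsTree) {v x : V} (hvx : v ≠ x) :
    ∃ (u : V) (h : G.Adj v u) (r : G.Walk u x), pathB hG v x = Walk.cons h r := by
  cases hp : pathB hG v x with
  | nil => exact absurd rfl hvx
  | cons h r => exact ⟨_, h, r, rfl⟩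

/-- In a tree, a neighbor of `w` lying on a path starting at `w` is the second vertex. -/
lemma second_eq (hG : G.IsTree) {w x a : V} {p : G.Walk w x} (hp : p.IsPath)
    (ha : G.Adj w a) (hmem : a ∈ p.support) : p.getVert 1 = a := by
  have ht : (p.takeUntil a hmem).IsPath := hp.takeUntil hmem
  have hE : (Walk.cons ha (Walk.nil : G.Walk a a)).IsPath := by
    rw [Walk.cons_isPath_iff]; exact ⟨Walk.IsPath.nil, by simpa using ha.ne⟩
  have h1 : p.takeUntil a hmem = Walk.cons ha Walk.nil := path_eq hG ht hE
  have h2 : p = Walk.cons ha (p.dropUntil a hmem) := by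
    conv_lhs => rw [← p.take_spec hmem]
    rw [h1, Walk.cons_append, Walk.nil_append]
  rw [h2, Walk.getVert_cons_succ, Walk.getVert_zero]

lemma adj_mem_eq (hG : G.IsTree) {w x a b : V} {p : G.Walk w x} (hp : p.IsPath)
    (hadja : G.Adj w a) (ha : a ∈ p.support) (hadjb : G.Adj w b) (hb : b ∈ p.support) :
    a = b := by
  rw [← second_eq hG hp hadja ha, second_eq hG hp hadjb hb]

/-- The branch of the tree at `w` away from `v`. -/
def Br (hG : G.IsTree) (v w : V) : Set V := {x | w ∈ (pathB hG v x).support}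

lemma mem_Br_end (hG : G.IsTree) (v w : V) : w ∈ Br hG v w :=
  (pathB hG v w).end_mem_support

lemma not_mem_Br (hG : G.IsTree) {v w : V} (hw : w ≠ v) : v ∉ Br hG v w := by
  intro h
  have : w ∈ (pathB hG v v).support := h
  rw [pathB_self] at this
  simp at this
  exact hw this

lemma Br_mono (hG : G.IsTree) {v w u : V} (hvw : G.Adj v w) (hwu : G.Adj w u)
    (huv : u ≠ v) : Br hG w u ⊆ Br hG v w := by
  intro x hx
  have hux : u ∈ (pathB hG w x).support := hx
  have hxw : x ≠ w := by
    rintro rfl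
    rw [pathB_self] at hux
    simp at hux
    exact hwu.ne' hux
  have hvns : v ∉ (pathB hG w x).support := by
    intro hv
    exact huv (adj_mem_eq hG (pathB_isPath hG w x) hwu hux hvw.symm hv)
  have hq : (Walk.cons hvw (pathB hG w x)).IsPath := by
    rw [Walk.cons_isPath_iff]; exact ⟨pathB_isPath hG w x, hvns⟩
  show w ∈ (pathB hG v x).support
  rw [path_eq hG (pathB_isPath hG v x) hq]
  simp only [Walk.support_cons, List.mem_cons]
  exact Or.inr (pathB hG w x).start_mem_support

lemma Br_cover (hG : G.IsTree) {v w x : V} (hvw : G.Adj v w) (hx : x ∈ Br hG v w)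
    (hxw : x ≠ w) : ∃ u, G.Adj w u ∧ u ≠ v ∧ x ∈ Br hG w u := by
  have hw : w ∈ (pathB hG v x).support := hx
  have hdrop : ((pathB hG v x).dropUntil w hw).IsPath := (pathB_isPath hG v x).dropUntil hw
  have hq : pathB hG w x = (pathB hG v x).dropUntil w hw :=
    path_eq hG (pathB_isPath hG w x) hdrop
  obtain ⟨u, h, r, hp2⟩ := exists_second hG (hxw.symm : w ≠ x)
  refine ⟨u, h, ?_, ?_⟩
  · intro hueq
    have hv_in : v ∈ ((pathB hG v x).dropUntil w hw).support.tail := by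
      rw [← hq, hp2]
      simp only [Walk.support_cons, List.tail_cons]
      exact hueq ▸ r.start_mem_support
    have hPs : ((pathB hG v x).support).Nodup := (pathB_isPath hG v x).support_nodup
    have hsup : (pathB hG v x).support =
        ((pathB hG v x).takeUntil w hw).support ++
          ((pathB hG v x).dropUntil w hw).support.tail := by
      conv_lhs => rw [← (pathB hG v x).take_spec hw]
      exact Walk.support_append _ _
    rw [hsup, List.nodup_append] at hPs
    exact hPs.2.2 _ (Walk.start_mem_support _) _ hv_in rfl
  · show u ∈ (pathB hG w x).support
    rw [hp2]
    simp only [Walk.support_cons, List.mem_cons]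
    exact Or.inr r.start_mem_support

lemma Br_init (hG : G.IsTree) {v x : V} (hvx : x ≠ v) : ∃ u, G.Adj v u ∧ x ∈ Br hG v u := by
  obtain ⟨u, h, r, hp⟩ := exists_second hG hvx.symm
  refine ⟨u, h, ?_⟩
  show u ∈ (pathB hG v x).support
  rw [hp]
  simp only [Walk.support_cons, List.mem_cons]
  exact Or.inr r.start_mem_support

end Koenig

end Stmt10Aux

namespace Stmt10Aux

variable {V : Type*} {G : SimpleGraph V}

open scoped Classical

lemma Br_step (hG : G.IsTree) (hfin : ∀ a : V, (G.neighborSet a).Finite) {v w : V}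
    (hvw : G.Adj v w) (hinf : (Br hG v w).Infinite) :
    ∃ u, G.Adj w u ∧ u ≠ v ∧ (Br hG w u).Infinite := by
  by_contra hcon
  push_neg at hcon
  have hsub : Br hG v w \ {w} ⊆ ⋃ u ∈ {u | G.Adj w u ∧ u ≠ v}, Br hG w u := by
    rintro x ⟨hx, hxw⟩
    obtain ⟨u, h1, h2, h3⟩ := Br_cover hG hvw hx (by simpa using hxw)
    exact Set.mem_biUnion (⟨h1, h2⟩ : _ ∧ _) h3
  have hTfin : {u | G.Adj w u ∧ u ≠ v}.Finite := (hfin w).subset (fun u hu => hu.1)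
  have hfin2 : (Br hG v w \ {w}).Finite :=
    (hTfin.biUnion (fun u hu => (hcon u hu.1 hu.2))).subset hsub
  exact (hinf.diff (Set.finite_singleton w)) hfin2

lemma Br_init_inf (hG : G.IsTree) (hfin : ∀ a : V, (G.neighborSet a).Finite) [Infinite V]
    (v : V) : ∃ u, G.Adj v u ∧ (Br hG v u).Infinite := by
  by_contra hcon
  push_neg at hcon
  have hsub : Set.univ \ {v} ⊆ ⋃ u ∈ G.neighborSet v, Br hG v u := by
    rintro x ⟨-, hxv⟩
    obtain ⟨u, h1, h2⟩ := Br_init hG (by simpa using hxv)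
    exact Set.mem_biUnion h1 h2
  have hfin2 : (Set.univ \ {v} : Set V).Finite :=
    ((hfin v).biUnion (fun u hu => (hcon u hu))).subset hsub
  exact (Set.infinite_univ.diff (Set.finite_singleton v)) hfin2

lemma exists_ray (hG : G.IsTree) (hfin : ∀ a : V, (G.neighborSet a).Finite) [Infinite V] :
    ∃ f : ℕ → V, Function.Injective f ∧ ∀ n, G.Adj (f n) (f (n + 1)) := by
  classical
  obtain ⟨v0⟩ : Nonempty V := inferInstance
  obtain ⟨u0, h0adj, h0inf⟩ := Br_init_inf hG hfin v0
  let σ := {p : V × V // G.Adj p.1 p.2 ∧ (Br hG p.1 p.2).Infinite}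
  have hstepex : ∀ p : σ, ∃ u, G.Adj p.1.2 u ∧ u ≠ p.1.1 ∧ (Br hG p.1.2 u).Infinite :=
    fun p => Br_step hG hfin p.2.1 p.2.2
  choose nxt hnxt1 hnxt2 hnxt3 using hstepex
  let step : σ → σ := fun p => ⟨(p.1.2, nxt p), hnxt1 p, hnxt3 p⟩
  let g : ℕ → σ := fun n => step^[n] ⟨(v0, u0), h0adj, h0inf⟩
  have hg : ∀ n, g (n + 1) = step (g n) := fun n => Function.iterate_succ_apply' step n _
  let f : ℕ → V := fun n => (g n).1.1
  have hsnd : ∀ n, (g (n + 1)).1.1 = (g n).1.2 := by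
    intro n; rw [hg]
  have hadj : ∀ n, G.Adj (f n) (f (n + 1)) := by
    intro n
    show G.Adj (g n).1.1 (g (n + 1)).1.1
    rw [hsnd]
    exact (g n).2.1
  let S : ℕ → Set V := fun n => Br hG (g n).1.1 (g n).1.2
  have hmono : ∀ n, S (n + 1) ⊆ S n := by
    intro n
    show Br hG (g (n + 1)).1.1 (g (n + 1)).1.2 ⊆ Br hG (g n).1.1 (g n).1.2
    rw [hg n]
    show Br hG (g n).1.2 (nxt (g n)) ⊆ _
    exact Br_mono hG (g n).2.1 (hnxt1 (g n)) (hnxt2 (g n))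
  have hmono' : ∀ n k, S (n + k) ⊆ S n := by
    intro n k
    induction k with
    | zero => exact fun x hx => hx
    | succ k ih => exact fun x hx => ih (hmono (n + k) hx)
  have hmem : ∀ n m, n < m → f m ∈ S n := by
    intro n m hnm
    have h1 : f m ∈ S (m - 1) := by
      show (g m).1.1 ∈ _
      have : m = (m - 1) + 1 := by omega
      rw [this, hsnd (m - 1)]
      exact mem_Br_end hG _ _
    have h2 : S (m - 1) ⊆ S n := by
      have : m - 1 = n + (m - 1 - n) := by omega
      rw [this]
      exact hmono' n _
    exact h2 h1
  have hnot : ∀ n, f n ∉ S n := fun n => not_mem_Br hG ((g n).2.1.ne' : (g n).1.2 ≠ (g n).1.1)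
  refine ⟨f, ?_, hadj⟩
  intro a b hab
  by_contra hne
  rcases Nat.lt_or_ge a b with h | h
  · exact hnot a (hab ▸ hmem a b h)
  · have h' : b < a := by omega
    exact hnot b (hab ▸ hmem b a h')
end Stmt10Aux

namespace Stmt10Aux

variable {V : Type*} {G : SimpleGraph V}

open scoped Classical

lemma coe_acyclic (hac : G.IsAcyclic) (Hs : G.Subgraph) : Hs.coe.IsAcyclic := by
  rw [isAcyclic_iff_path_unique]
  intro v w p q
  have h := (isAcyclic_iff_path_unique.1 hac)
    (p.map Hs.hom Subgraph.hom_injective) (q.map Hs.hom Subgraph.hom_injective)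
  exact Path.map_injective Subgraph.hom_injective _ _ h

lemma almostRay_of_ray (hG : G.IsTree) (hfin : ∀ a : V, (G.neighborSet a).Finite)
    {f : ℕ → V} (hinj : Function.Injective f) (hadj : ∀ n, G.Adj (f n) (f (n + 1)))
    (hW : {x : V | x ∉ Set.range f}.Finite) : IsAlmostRayGraph G := by
  classical
  set W := {x : V | x ∉ Set.range f} with hWdef
  -- indices of ray vertices adjacent to off-ray vertices
  set Γ := {k : ℕ | ∃ w ∈ W, G.Adj w (f k)} with hΓdef
  have hΓfin : Γ.Finite := by
    have hsub : Γ ⊆ ⋃ w ∈ W, f ⁻¹' (G.neighborSet w) := by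
      rintro k ⟨w, hw, hk⟩
      exact Set.mem_biUnion hw hk
    exact (hW.biUnion (fun w _ => (hfin w).preimage hinj.injOn)).subset hsub
  obtain ⟨N, hN⟩ := hΓfin.bddAbove
  set B := W ∪ f '' {k | k ≤ N} with hBdef
  have hBfin : B.Finite := hW.union ((Set.finite_le_nat N).image f)
  set H := ⋃ b ∈ B, {x | x ∈ (pathB hG (f 0) b).support} with hHdef
  have hHfin : H.Finite := hBfin.biUnion (fun b _ => (pathB hG (f 0) b).support.finite_toSet)
  have hBH : B ⊆ H := fun b hb =>
    Set.mem_biUnion hb ((pathB hG (f 0) b).end_mem_support)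
  have hf0 : f 0 ∈ H := hBH (Or.inr ⟨0, Nat.zero_le N, rfl⟩)
  have hclosed : ∀ {x : V}, x ∈ H → ∀ y ∈ (pathB hG (f 0) x).support, y ∈ H := by
    intro x hx y hy
    rw [hHdef, Set.mem_iUnion₂] at hx
    obtain ⟨b, hb, hxb⟩ := hx
    have ht : pathB hG (f 0) x = (pathB hG (f 0) b).takeUntil x hxb :=
      path_eq hG (pathB_isPath hG _ _) ((pathB_isPath hG _ _).takeUntil hxb)
    rw [ht] at hy
    exact Set.mem_biUnion hb ((pathB hG (f 0) b).support_takeUntil_subset hxb hy)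
  -- the finite subtree
  set T0 : G.Subgraph :=
    { verts := H
      Adj := fun x y => G.Adj x y ∧ x ∈ H ∧ y ∈ H
      adj_sub := fun h => h.1
      edge_vert := fun h => h.2.1
      symm := ⟨fun x y h => ⟨h.1.symm, h.2.2, h.2.1⟩⟩ } with hT0def
  have reach : ∀ (a b : V) (p : G.Walk a b) (ha : a ∈ H) (hb : b ∈ H),
      (∀ x ∈ p.support, x ∈ H) → T0.coe.Reachable ⟨a, ha⟩ ⟨b, hb⟩ := by
    intro a b p
    induction p with
    | nil => intro ha hb _; exact Reachable.refl _
    | @cons a c b h q ih =>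
      intro ha hb hp
      have hc : c ∈ H := hp c (by simp)
      have hstep : T0.coe.Adj ⟨a, ha⟩ ⟨c, hc⟩ := ⟨h, ha, hc⟩
      exact hstep.reachable.trans (ih hc hb (fun x hx => hp x (by simp [hx])))
  have hconn : T0.coe.Connected := by
    rw [connected_iff]
    refine ⟨fun x y => ?_, ⟨⟨f 0, hf0⟩⟩⟩
    obtain ⟨x, hx⟩ := x
    obtain ⟨y, hy⟩ := y
    have h1 := reach (f 0) x (pathB hG (f 0) x) hf0 hx (hclosed hx)
    have h2 := reach (f 0) y (pathB hG (f 0) y) hf0 hy (hclosed hy)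
    exact h1.symm.trans h2
  -- the ray subgraph
  set R : G.Subgraph :=
    { verts := Set.range f
      Adj := fun x y => ∃ n, (x = f n ∧ y = f (n + 1)) ∨ (x = f (n + 1) ∧ y = f n)
      adj_sub := by
        rintro x y ⟨n, (⟨rfl, rfl⟩ | ⟨rfl, rfl⟩)⟩
        · exact hadj n
        · exact (hadj n).symm
      edge_vert := by
        rintro x y ⟨n, (⟨rfl, -⟩ | ⟨rfl, -⟩)⟩
        · exact ⟨n, rfl⟩
        · exact ⟨n + 1, rfl⟩
      symm := by
        constructor
        rintro x y ⟨n, (⟨rfl, rfl⟩ | ⟨rfl, rfl⟩)⟩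
        · exact ⟨n, Or.inr ⟨rfl, rfl⟩⟩
        · exact ⟨n, Or.inl ⟨rfl, rfl⟩⟩ } with hRdef
  refine ⟨R, T0, ⟨f, hinj, rfl, fun x y => Iff.rfl⟩, ⟨hHfin, hconn, coe_acyclic hG.2 T0⟩, ?_⟩
  apply Subgraph.ext
  · -- verts
    show H ∪ Set.range f = Set.univ
    rw [Set.eq_univ_iff_forall]
    intro x
    by_cases hx : x ∈ Set.range f
    · exact Or.inr hx
    · exact Or.inl (hBH (Or.inl hx))
  · funext x y
    apply propext
    show T0.Adj x y ∨ R.Adj x y ↔ G.Adj x y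
    constructor
    · rintro (h | h)
      · exact h.1
      · exact R.adj_sub h
    · intro hxy
      by_cases hx : x ∈ Set.range f
      · by_cases hy : y ∈ Set.range f
        · obtain ⟨n, rfl⟩ := hx
          obtain ⟨m, rfl⟩ := hy
          have hnm : n ≠ m := fun h => hxy.ne (congrArg f h)
          rcases Nat.lt_or_ge n m with h | h
          · have := ray_adj_consecutive hG hinj hadj hxy h
            exact Or.inr ⟨n, Or.inl ⟨rfl, by rw [this]⟩⟩
          · have h' : m < n := by omega
            have := ray_adj_consecutive hG hinj hadj hxy.symm h'
            exact Or.inr ⟨m, Or.inr ⟨by rw [this], rfl⟩⟩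
        · obtain ⟨k, rfl⟩ := hx
          have hk : k ∈ Γ := ⟨y, hy, hxy.symm⟩
          exact Or.inl ⟨hxy, hBH (Or.inr ⟨k, hN hk, rfl⟩), hBH (Or.inl hy)⟩
      · by_cases hy : y ∈ Set.range f
        · obtain ⟨k, rfl⟩ := hy
          have hk : k ∈ Γ := ⟨x, hx, hxy⟩
          exact Or.inl ⟨hxy, hBH (Or.inl hx), hBH (Or.inr ⟨k, hN hk, rfl⟩)⟩
        · exact Or.inl ⟨hxy, hBH (Or.inl hx), hBH (Or.inl hy)⟩

end Stmt10Aux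

namespace Stmt10Aux

variable {V : Type*} {G : SimpleGraph V}

open scoped Classical

/-- The right-hand side of the main theorem. -/
def RHSprop (G : SimpleGraph V) : Prop :=
  ∀ l : V → ℝ, (∀ w, 0 ≤ l w) → NondegenerateLabeling G l →
    ∀ d : V → V → ℝ, IsLabelDist G l d →
      (TotallyBoundedWith d Set.univ ↔
        ∃ A : Set V, A.Infinite ∧ TotallyBoundedWith d A)

lemma one_div_succ_le {K k : ℕ} (h : K ≤ k) : (1 : ℝ) / (k + 1) ≤ 1 / (K + 1) := by
  apply one_div_le_one_div_of_le
  · positivity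
  · have : (K : ℝ) ≤ k := Nat.cast_le.2 h
    linarith

lemma not_RHS_of_infDeg (hG : G.IsTree) {v : V} (hv : (G.neighborSet v).Infinite) :
    ¬ RHSprop G := by
  intro hR
  classical
  let e := hv.natEmbedding
  let g : ℕ → V := fun n => (e n : V)
  have hginj : Function.Injective g := fun a b h => e.injective (Subtype.ext h)
  have hgadj : ∀ n, G.Adj v (g n) := fun n => (e n).2
  have hgv : ∀ n, g n ≠ v := fun n => (hgadj n).ne'
  let l : V → ℝ := fun x =>
    if h : ∃ k, x = g (2 * k) then 1 / (((Classical.choose h : ℕ) : ℝ) + 1)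
    else if x = v then 0 else 1
  have hlg : ∀ k, l (g (2 * k)) = 1 / (k + 1) := by
    intro k
    have hex : ∃ j, g (2 * k) = g (2 * j) := ⟨k, rfl⟩
    have hch : Classical.choose hex = k := by
      have h := hginj (Classical.choose_spec hex)
      omega
    show dite _ _ _ = _
    rw [dif_pos hex, hch]
  have hlv : l v = 0 := by
    have hex : ¬ ∃ k, v = g (2 * k) := by
      rintro ⟨k, hk⟩; exact hgv (2 * k) hk.symm
    show dite _ _ _ = _
    rw [dif_neg hex, if_pos rfl]
  have hlodd : ∀ k, l (g (2 * k + 1)) = 1 := by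
    intro k
    have hex : ¬ ∃ j, g (2 * k + 1) = g (2 * j) := by
      rintro ⟨j, hj⟩; have := hginj hj; omega
    show dite _ _ _ = _
    rw [dif_neg hex, if_neg (hgv _)]
  have hlpos : ∀ x, x ≠ v → 0 < l x := by
    intro x hx
    rcases Classical.em (∃ k, x = g (2 * k)) with h | h
    · obtain ⟨k, rfl⟩ := h; rw [hlg]; positivity
    · show (0:ℝ) < dite _ _ _
      rw [dif_neg h, if_neg hx]; norm_num
  have hl0 : ∀ w, 0 ≤ l w := by
    intro w
    rcases eq_or_ne w v with rfl | hw
    · rw [hlv]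
    · exact (hlpos w hw).le
  have hnd : NondegenerateLabeling G l := by
    intro a b hab
    rcases eq_or_ne a v with rfl | ha
    · exact lt_max_iff.2 (Or.inr (hlpos b hab.ne'))
    · exact lt_max_iff.2 (Or.inl (hlpos a ha))
  have hd := dOf_isLabelDist hG l
  have hiff := hR l hl0 hnd (dOf hG l) hd
  have hA : ∃ A : Set V, A.Infinite ∧ TotallyBoundedWith (dOf hG l) A := by
    refine ⟨Set.range (fun k => g (2 * k)),
      Set.infinite_range_of_injective (fun a b h => by have := hginj h; omega), ?_⟩
    intro r hr
    obtain ⟨K, hK⟩ := exists_nat_one_div_lt hr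
    refine ⟨(Finset.range (K + 1)).image (fun k => g (2 * k)), ?_, ?_⟩
    · intro x hx
      simp only [Finset.coe_image, Set.mem_image, Finset.mem_coe, Finset.mem_range] at hx
      obtain ⟨k, _, rfl⟩ := hx
      exact ⟨k, rfl⟩
    · rintro x ⟨k, rfl⟩
      by_cases hk : k ≤ K
      · refine ⟨g (2 * k), ?_, ?_⟩
        · simp only [Finset.mem_image, Finset.mem_range]
          exact ⟨k, by omega, rfl⟩
        · rw [hd.1]; exact hr
      · refine ⟨g (2 * K), ?_, ?_⟩
        · simp only [Finset.mem_image, Finset.mem_range]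
          exact ⟨K, by omega, rfl⟩
        · have hne : g (2 * K) ≠ g (2 * k) := fun h => hk (by have := hginj h; omega)
          have hp : (Walk.cons (hgadj (2 * K)).symm
              (Walk.cons (hgadj (2 * k)) Walk.nil)).IsPath := by
            rw [Walk.cons_isPath_iff, Walk.cons_isPath_iff]
            refine ⟨⟨Walk.IsPath.nil, by simpa using (hgv (2 * k)).symm⟩, ?_⟩
            simp only [Walk.support_cons, Walk.support_nil, List.mem_cons,
              List.mem_singleton, List.not_mem_nil]
            push_neg
            exact ⟨hgv (2 * K), hne, by simp⟩
          obtain ⟨w, hw, hweq⟩ := ((hd.2 _ _ hne _ hp).1 : _)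
          have hw' : w = g (2 * K) ∨ w = v ∨ w = g (2 * k) := by
            simpa using hw
          rw [← hweq]
          rcases hw' with rfl | rfl | rfl
          · rw [hlg]; exact hK
          · rw [hlv]; exact hr
          · rw [hlg]
            exact lt_of_le_of_lt (one_div_succ_le (by omega)) hK
  have hTB : TotallyBoundedWith (dOf hG l) Set.univ := hiff.2 hA
  have hfin := finite_of_totallyBounded hG hd hTB
  have hinf : {x : V | 1 ≤ l x}.Infinite := by
    refine Set.Infinite.mono ?_
      (Set.infinite_range_of_injective (f := fun k => g (2 * k + 1))
        (fun a b h => by have := hginj h; omega))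
    rintro x ⟨k, rfl⟩
    exact le_of_eq (hlodd k).symm
  exact hinf hfin

lemma not_RHS_of_ray_inf (hG : G.IsTree) {f : ℕ → V} (hinj : Function.Injective f)
    (hadj : ∀ n, G.Adj (f n) (f (n + 1)))
    (hWinf : {x : V | x ∉ Set.range f}.Infinite) : ¬ RHSprop G := by
  intro hR
  classical
  let l : V → ℝ := fun x =>
    if h : ∃ n, x = f n then 1 / (((Classical.choose h : ℕ) : ℝ) + 1) else 1
  have hlf : ∀ n, l (f n) = 1 / (n + 1) := by
    intro n
    have hex : ∃ m, f n = f m := ⟨n, rfl⟩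
    have hch : Classical.choose hex = n := (hinj (Classical.choose_spec hex)).symm
    show dite _ _ _ = _
    rw [dif_pos hex, hch]
  have hloff : ∀ x, x ∉ Set.range f → l x = 1 := by
    intro x hx
    have hex : ¬ ∃ n, x = f n := by rintro ⟨n, rfl⟩; exact hx ⟨n, rfl⟩
    show dite _ _ _ = _
    rw [dif_neg hex]
  have hlpos : ∀ x, 0 < l x := by
    intro x
    show 0 < dite _ _ _
    split
    · positivity
    · norm_num
  have hnd : NondegenerateLabeling G l := fun a b _ => lt_max_iff.2 (Or.inl (hlpos a))
  have hd := dOf_isLabelDist hG l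
  have hiff := hR l (fun w => (hlpos w).le) hnd (dOf hG l) hd
  have hA : ∃ A : Set V, A.Infinite ∧ TotallyBoundedWith (dOf hG l) A := by
    refine ⟨Set.range f, Set.infinite_range_of_injective hinj, ?_⟩
    intro r hr
    obtain ⟨K, hK⟩ := exists_nat_one_div_lt hr
    refine ⟨(Finset.range (K + 1)).image f, ?_, ?_⟩
    · intro x hx
      simp only [Finset.coe_image, Set.mem_image, Finset.mem_coe, Finset.mem_range] at hx
      obtain ⟨k, _, rfl⟩ := hx
      exact ⟨k, rfl⟩
    · rintro x ⟨n, rfl⟩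
      by_cases hn : n ≤ K
      · refine ⟨f n, ?_, ?_⟩
        · simp only [Finset.mem_image, Finset.mem_range]
          exact ⟨n, by omega, rfl⟩
        · rw [hd.1]; exact hr
      · refine ⟨f K, ?_, ?_⟩
        · simp only [Finset.mem_image, Finset.mem_range]
          exact ⟨K, by omega, rfl⟩
        · have hne : f K ≠ f n := fun h => hn (by have := hinj h; omega)
          obtain ⟨w, hw, hweq⟩ := d_mem hG hd hne
          rw [pathB_ray hG hinj hadj (by omega : K ≤ n), Walk.support_copy,
            mem_support_rayWalk] at hw
          obtain ⟨i, hi, rfl⟩ := hw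
          rw [hweq, hlf]
          exact lt_of_le_of_lt (one_div_succ_le (by omega)) hK
  have hTB : TotallyBoundedWith (dOf hG l) Set.univ := hiff.2 hA
  have hfin := finite_of_totallyBounded hG hd hTB
  have hinf : {x : V | 1 ≤ l x}.Infinite := by
    refine hWinf.mono ?_
    intro x hx
    exact le_of_eq (hloff x hx).symm
  exact hinf hfin

end Stmt10Aux

namespace Stmt10Aux

variable {V : Type*} {G : SimpleGraph V}

open scoped Classical

lemma forward_dir (hG : G.IsTree) [Infinite V] (hAR : IsAlmostRayGraph G) : RHSprop G := by
  obtain ⟨R, T0, ⟨f, hinj, hverts, hAdjIff⟩, ⟨hT0fin, -⟩, hsup⟩ := hAR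
  have hadj : ∀ n, G.Adj (f n) (f (n + 1)) := fun n =>
    R.adj_sub ((hAdjIff _ _).2 ⟨n, Or.inl ⟨rfl, rfl⟩⟩)
  have huniv : T0.verts ∪ Set.range f = Set.univ := by
    have h := congrArg Subgraph.verts hsup
    rwa [Subgraph.verts_sup, hverts, Subgraph.verts_top] at h
  intro l hl0 hnd d hd
  constructor
  · intro hTB
    exact ⟨Set.univ, Set.infinite_univ, hTB⟩
  · rintro ⟨A, hAinf, hATB⟩ r hr
    have hA'inf : (A \ T0.verts).Infinite := hAinf.diff hT0fin
    have hA'ray : A \ T0.verts ⊆ Set.range f := by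
      intro x hx
      have : x ∈ T0.verts ∪ Set.range f := huniv.symm ▸ Set.mem_univ x
      rcases this with h | h
      · exact absurd h hx.2
      · exact h
    obtain ⟨s, hsA, hs⟩ := hATB r hr
    -- pigeonhole: one center covers infinitely many off-tree elements of A
    have hex : ∃ c ∈ (s : Set V), {x ∈ A \ T0.verts | d c x < r}.Infinite := by
      by_contra hcon
      push_neg at hcon
      have hsub : A \ T0.verts ⊆ ⋃ c ∈ (s : Set V), {x ∈ A \ T0.verts | d c x < r} := by
        intro x hx
        obtain ⟨c, hc, hcx⟩ := hs x hx.1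
        exact Set.mem_biUnion hc ⟨hx, hcx⟩
      exact hA'inf ((s.finite_toSet.biUnion
        (fun c hc => (hcon c hc))).subset hsub)
    obtain ⟨c, hcs, hcinf⟩ := hex
    set I := {x ∈ A \ T0.verts | d c x < r} with hIdef
    set J := {n : ℕ | f n ∈ I} with hJdef
    have hJinf : J.Infinite := by
      by_contra hfin
      rw [Set.not_infinite] at hfin
      have hIsub : I ⊆ f '' J := by
        intro x hx
        obtain ⟨n, rfl⟩ := hA'ray hx.1
        exact ⟨n, hx, rfl⟩
      exact hcinf ((hfin.image f).subset hIsub)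
    obtain ⟨n₀, hn₀⟩ := hJinf.nonempty
    have hsmall : ∀ k, n₀ ≤ k → l (f k) < r := by
      intro k hk
      obtain ⟨m, hmJ, hmk⟩ := hJinf.exists_gt k
      have hne : f n₀ ≠ f m := fun h => by have := hinj h; omega
      have hlt := label_lt_on_path hG hd hne (fun _ => hn₀.2) (fun _ => hmJ.2)
      apply hlt
      rw [pathB_ray hG hinj hadj (by omega : n₀ ≤ m), Walk.support_copy,
        mem_support_rayWalk]
      exact ⟨k - n₀, by omega, by congr 1; omega⟩
    refine ⟨hT0fin.toFinset ∪ (Finset.range (n₀ + 1)).image f, Set.subset_univ _, ?_⟩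
    intro x _
    by_cases hxT : x ∈ T0.verts
    · refine ⟨x, ?_, by rw [hd.1]; exact hr⟩
      simp only [Finset.mem_union, Set.Finite.mem_toFinset]
      exact Or.inl hxT
    · have hx : x ∈ Set.range f := by
        have : x ∈ T0.verts ∪ Set.range f := huniv.symm ▸ Set.mem_univ x
        rcases this with h | h
        · exact absurd h hxT
        · exact h
      obtain ⟨k, rfl⟩ := hx
      by_cases hk : k ≤ n₀
      · refine ⟨f k, ?_, by rw [hd.1]; exact hr⟩
        simp only [Finset.mem_union, Finset.mem_image, Finset.mem_range]
        exact Or.inr ⟨k, by omega, rfl⟩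
      · have hne : f n₀ ≠ f k := fun h => hk (by have := hinj h; omega)
        refine ⟨f n₀, ?_, ?_⟩
        · simp only [Finset.mem_union, Finset.mem_image, Finset.mem_range]
          exact Or.inr ⟨n₀, by omega, rfl⟩
        · obtain ⟨w, hw, hweq⟩ := d_mem hG hd hne
          rw [pathB_ray hG hinj hadj (by omega : n₀ ≤ k), Walk.support_copy,
            mem_support_rayWalk] at hw
          obtain ⟨i, hi, rfl⟩ := hw
          rw [hweq]
          exact hsmall _ (by omega)

end Stmt10Aux


open Stmt10Aux in
/-- An infinite tree `T` is almost a ray iff for every non-degenerate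
labeling `l` the space `(V(T), d_l)` is totally bounded exactly when it contains an
infinite totally bounded subset. -/
theorem stmt10 {V : Type*} [Infinite V] (G : SimpleGraph V) (hG : G.IsTree) :
    IsAlmostRayGraph G ↔
      ∀ l : V → ℝ, (∀ w, 0 ≤ l w) → NondegenerateLabeling G l →
        ∀ d : V → V → ℝ, IsLabelDist G l d →
          (TotallyBoundedWith d Set.univ ↔
            ∃ A : Set V, A.Infinite ∧ TotallyBoundedWith d A) := by
  constructor
  · intro hAR
    exact forward_dir hG hAR
  · intro hR
    have hR' : RHSprop G := hR
    by_cases hdeg : ∀ a : V, (G.neighborSet a).Finite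
    · obtain ⟨f, hinj, hadj⟩ := exists_ray hG hdeg
      by_cases hW : {x : V | x ∉ Set.range f}.Finite
      · exact almostRay_of_ray hG hdeg hinj hadj hW
      · exact absurd hR' (not_RHS_of_ray_inf hG hinj hadj (Set.not_infinite.not_right.1 hW))
    · push_neg at hdeg
      obtain ⟨a, ha⟩ := hdeg
      exact absurd hR' (not_RHS_of_infDeg hG ha)
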